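/- Let X be a real Banach space, x, y ∈ S_X, and suppose that for all ε > 0, y ∈ cl conv{z ∈ B_{X**} : ‖x − z‖ ≥ 2 − ε} (closed convex hull taken in X**, with x, y viewed as elements of X** via the canonical embedding). Then for all ε > 0, y ∈ cl conv{z ∈ B_X : ‖x − z‖ ≥ 2 − ε}. -/

import Mathlib

open NormedSpace

/-- Mini-Goldstine: a bidual element of norm ≤ 1 can be approximated on two
functionals simultaneously by an element of the unit ball of `X`. -/
lemma approx_two {X : Type*} [NormedAddCommGroup X] [NormedSpace ℝ X]
    (z : StrongDual ℝ (StrongDual ℝ X)) (hz : ‖z‖ ≤ 1) (f g : StrongDual ℝ X) {η : ℝ} (hη : 0 < η) :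
    ∃ w : X, ‖w‖ ≤ 1 ∧ |f w - z f| ≤ η ∧ |g w - z g| ≤ η := by
  set Φ : X →L[ℝ] ℝ × ℝ := f.prod g with hΦ
  have hball : {w : X | ‖w‖ ≤ 1} = Metric.closedBall (0:X) 1 := by
    ext w; simp [Metric.mem_closedBall, dist_eq_norm]
  set K : Set (ℝ × ℝ) := closure (Φ '' {w : X | ‖w‖ ≤ 1}) with hK
  have hKconv : Convex ℝ K := by
    apply Convex.closure
    rw [hball]
    exact (convex_closedBall (0:X) 1).linear_image (Φ : X →ₗ[ℝ] ℝ × ℝ)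
  have hmem : (z f, z g) ∈ K := by
    by_contra hv
    obtain ⟨φ, u, hKu, huv⟩ := geometric_hahn_banach_closed_point hKconv isClosed_closure hv
    set a : ℝ := φ (1, 0) with ha
    set b : ℝ := φ (0, 1) with hb
    have hφ : ∀ p : ℝ × ℝ, φ p = p.1 * a + p.2 * b := by
      intro p
      have : p = p.1 • ((1:ℝ), (0:ℝ)) + p.2 • ((0:ℝ), (1:ℝ)) := by
        ext <;> simp
      rw [this, map_add, map_smul, map_smul]
      simp [ha, hb, smul_eq_mul]
    set hfun : StrongDual ℝ X := a • f + b • g with hh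
    have hKlt : ∀ w : X, ‖w‖ ≤ 1 → hfun w < u := by
      intro w hw
      have := hKu (Φ w) (subset_closure ⟨w, hw, rfl⟩)
      rw [hφ] at this
      simpa [hh, hΦ, mul_comm] using this
    have hu0 : 0 < u := by
      have := hKlt 0 (by simp)
      simpa using this
    have hnorm : ‖hfun‖ ≤ u := by
      by_contra hc
      push_neg at hc
      obtain ⟨w, hw1, hw2⟩ := ContinuousLinearMap.exists_lt_apply_of_lt_opNorm hfun hc
      rw [Real.norm_eq_abs] at hw2
      have h1 := hKlt w hw1.le
      have h2 := hKlt (-w) (by simpa using hw1.le)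
      have h3 : hfun (-w) = -(hfun w) := map_neg _ _
      rcases abs_cases (hfun w) with ⟨he, _⟩ | ⟨he, _⟩ <;> rw [he] at hw2 <;> linarith
    have hzh : z hfun ≤ u := by
      calc z hfun ≤ ‖z hfun‖ := le_abs_self _
        _ ≤ ‖z‖ * ‖hfun‖ := z.le_opNorm _
        _ ≤ 1 * u := by
            apply mul_le_mul hz hnorm (norm_nonneg _) zero_le_one
        _ = u := one_mul u
    have : φ (z f, z g) = z hfun := by
      rw [hφ]; simp [hh, mul_comm]
    rw [this] at huv
    linarith
  rw [Metric.mem_closure_iff] at hmem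
  obtain ⟨p, hp, hd⟩ := hmem η hη
  obtain ⟨w, hw, rfl⟩ := hp
  rw [Prod.dist_eq] at hd
  refine ⟨w, hw, ?_, ?_⟩
  · have h1 : dist (z f) (Φ w).1 ≤ η := le_trans (le_max_left _ _) hd.le
    rw [Real.dist_eq, abs_sub_comm] at h1
    simpa [hΦ] using h1
  · have h2 : dist (z g) (Φ w).2 ≤ η := le_trans (le_max_right _ _) hd.le
    rw [Real.dist_eq, abs_sub_comm] at h2
    simpa [hΦ] using h2

theorem stmt_11 {X : Type*} [NormedAddCommGroup X] [NormedSpace ℝ X]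
    (x y : X) (hx : ‖x‖ = 1) (hy : ‖y‖ = 1)
    (h : ∀ ε > (0 : ℝ),
      inclusionInDoubleDual ℝ X y ∈
        closure (convexHull ℝ {z : StrongDual ℝ (StrongDual ℝ X) |
          ‖z‖ ≤ 1 ∧ 2 - ε ≤ ‖inclusionInDoubleDual ℝ X x - z‖})) :
    ∀ ε > (0 : ℝ),
      y ∈ closure (convexHull ℝ {z : X | ‖z‖ ≤ 1 ∧ 2 - ε ≤ ‖x - z‖}) := by
  intro ε hε
  set S : Set X := {z : X | ‖z‖ ≤ 1 ∧ 2 - ε ≤ ‖x - z‖} with hS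
  by_cases hε2 : 2 ≤ ε
  · -- trivial case: y itself belongs to S
    have : y ∈ S := ⟨hy.le, by linarith [norm_nonneg (x - y)]⟩
    exact subset_closure (subset_convexHull ℝ S this)
  push_neg at hε2
  by_contra hyC
  obtain ⟨f, u, hfy, hfC⟩ := geometric_hahn_banach_point_closed
    (convex_convexHull ℝ S).closure isClosed_closure hyC
  set δ : ℝ := (u - f y) / 2 with hδdef
  have hδ : 0 < δ := by simp [hδdef]; linarith
  set η : ℝ := min δ (ε / 4) with hηdef
  have hη : 0 < η := lt_min hδ (by linarith)
  -- every element of the bidual set (with ε/2) satisfies `u - δ ≤ z f`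
  set T : Set (StrongDual ℝ (StrongDual ℝ X)) :=
    {z : StrongDual ℝ (StrongDual ℝ X) | ‖z‖ ≤ 1 ∧ 2 - ε / 2 ≤ ‖inclusionInDoubleDual ℝ X x - z‖} with hT
  have hTH : ∀ z ∈ T, u - δ ≤ z f := by
    rintro z ⟨hz1, hz2⟩
    have hc : (2 - 3 * ε / 4 : ℝ) < ‖inclusionInDoubleDual ℝ X x - z‖ := by linarith
    obtain ⟨g, hg1, hg2⟩ :=
      ContinuousLinearMap.exists_lt_apply_of_lt_opNorm (inclusionInDoubleDual ℝ X x - z) hc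
    -- choose the sign of g so that the value itself is large
    have hgood : ∃ g' : StrongDual ℝ X, ‖g'‖ ≤ 1 ∧
        2 - 3 * ε / 4 < g' x - z g' := by
      rw [Real.norm_eq_abs] at hg2
      rcases abs_cases ((inclusionInDoubleDual ℝ X x - z) g) with ⟨he, _⟩ | ⟨he, _⟩
      · refine ⟨g, hg1.le, ?_⟩
        have : (inclusionInDoubleDual ℝ X x - z) g = g x - z g := by
          simp [dual_def]
        rw [he, this] at hg2; linarith
      · refine ⟨-g, by simpa using hg1.le, ?_⟩
        have : (inclusionInDoubleDual ℝ X x - z) g = g x - z g := by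
          simp [dual_def]
        rw [he, this] at hg2
        simp only [ContinuousLinearMap.neg_apply, map_neg]
        linarith
    obtain ⟨g, hgnorm, hgval⟩ := hgood
    obtain ⟨w, hw1, hwf, hwg⟩ := approx_two z hz1 f g hη
    -- w ∈ S
    have hwg' : g w ≤ z g + η := by
      have := abs_le.mp hwg
      linarith [this.2]
    have hwS : w ∈ S := by
      refine ⟨hw1, ?_⟩
      have h1 : g (x - w) = g x - g w := by rw [map_sub]
      have h2 : g (x - w) ≤ ‖x - w‖ := by
        calc g (x - w) ≤ |g (x - w)| := le_abs_self _
          _ ≤ ‖g‖ * ‖x - w‖ := g.le_opNorm _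
          _ ≤ 1 * ‖x - w‖ := by
              exact mul_le_mul_of_nonneg_right hgnorm (norm_nonneg _)
          _ = ‖x - w‖ := one_mul _
      have hηε : η ≤ ε / 4 := min_le_right _ _
      rw [h1] at h2
      linarith
    have hfw : u < f w := hfC w (subset_closure (subset_convexHull ℝ S hwS))
    have : f w - z f ≤ η := (le_abs_self _).trans hwf
    have hηδ : η ≤ δ := min_le_left _ _
    linarith
  -- the halfspace H is closed and convex and contains closure (convexHull T)
  set G : StrongDual ℝ (StrongDual ℝ X) →L[ℝ] ℝ := ContinuousLinearMap.apply ℝ ℝ f with hG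
  set H : Set (StrongDual ℝ (StrongDual ℝ X)) := {z | u - δ ≤ G z} with hH
  have hTH' : T ⊆ H := fun z hz => hTH z hz
  have hHconv : Convex ℝ H := convex_halfSpace_ge
    (IsLinearMap.mk G.map_add G.map_smul) (u - δ)
  have hHclosed : IsClosed H := isClosed_le continuous_const G.continuous
  have hsub : closure (convexHull ℝ T) ⊆ H :=
    closure_minimal (convexHull_min hTH' hHconv) hHclosed
  have hyH := hsub (h (ε / 2) (by linarith))
  have : u - δ ≤ f y := by simpa [hH, hG, dual_def] using hyH
  simp only [hδdef] at this
  linarith
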